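/- Let r_i denote the i-th smallest prime greater than 3. For every integer t ≥ 10, the product r₃·r₄·⋯·r_t is strictly greater than 580·1492·(12·(t+3)·2^(t-3) - 7). -/

import Mathlib

/-- `r i` is the `i`-th smallest prime greater than 3 (so `r 1 = 5`, `r 2 = 7`, ...). -/
noncomputable def r (i : ℕ) : ℕ := Nat.nth (fun q => Nat.Prime q ∧ 3 < q) (i - 1)

lemma hinf : {q | Nat.Prime q ∧ 3 < q}.Infinite := by
  refine ((Nat.infinite_setOf_prime.diff (Set.finite_le_nat 3)).mono ?_)
  intro q hq; exact ⟨hq.1, not_le.mp hq.2⟩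

lemma r_val (i n : ℕ) (hn : Nat.Prime n ∧ 3 < n)
    (hc : Nat.count (fun q => Nat.Prime q ∧ 3 < q) n = i - 1) : r i = n := by
  rw [r, ← hc, Nat.nth_count hn]

lemma r_gt (i : ℕ) : 3 < r i :=
  (Nat.nth_mem_of_infinite hinf (i - 1)).2

theorem stmt_10 (t : ℕ) (ht : 10 ≤ t) :
    580 * 1492 * (12 * ((t + 3) * 2 ^ (t - 3)) - 7) < ∏ i ∈ Finset.Icc 3 t, r i := by
  induction t with
  | zero => omega
  | succ n ih =>
    rcases Nat.lt_or_ge n 10 with h | h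
    · -- base case: n + 1 = 10
      have hn : n = 9 := by omega
      subst hn
      have h3 : r 3 = 11 := r_val 3 11 (by norm_num) (by decide)
      have h4 : r 4 = 13 := r_val 4 13 (by norm_num) (by decide)
      have h5 : r 5 = 17 := r_val 5 17 (by norm_num) (by decide)
      have h6 : r 6 = 19 := r_val 6 19 (by norm_num) (by decide)
      have h7 : r 7 = 23 := r_val 7 23 (by norm_num) (by decide)
      have h8 : r 8 = 29 := r_val 8 29 (by norm_num) (by decide)
      have h9 : r 9 = 31 := r_val 9 31 (by norm_num) (by decide)
      have h10 : r 10 = 37 := r_val 10 37 (by norm_num) (by decide)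
      have hI : Finset.Icc 3 10 = ({3,4,5,6,7,8,9,10} : Finset ℕ) := by decide
      show 580 * 1492 * (12 * ((9 + 1 + 3) * 2 ^ (9 + 1 - 3)) - 7) < _
      rw [hI]
      norm_num [Finset.prod_insert, Finset.mem_insert, h3, h4, h5, h6, h7, h8, h9, h10]
    · -- inductive step
      have ih' := ih h
      have hprod : ∏ i ∈ Finset.Icc 3 (n + 1), r i = (∏ i ∈ Finset.Icc 3 n, r i) * r (n + 1) :=
        Finset.prod_Icc_succ_top (by omega) _
      have hr : 4 ≤ r (n + 1) := r_gt (n + 1)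
      -- arithmetic
      have h2 : 2 ^ (n + 1 - 3) = 2 * 2 ^ (n - 3) := by
        rw [show n + 1 - 3 = (n - 3) + 1 by omega, pow_succ]; ring
      have ha : (128 : ℕ) ≤ 2 ^ (n - 3) := by
        calc (128 : ℕ) = 2 ^ 7 := by norm_num
        _ ≤ 2 ^ (n - 3) := Nat.pow_le_pow_right (by norm_num) (by omega)
      set a := 2 ^ (n - 3) with haa
      have key : 12 * ((n + 1 + 3) * (2 * a)) - 7 ≤ 4 * (12 * ((n + 3) * a) - 7) := by
        have h1 : 12 * ((n + 1 + 3) * (2 * a)) + 21 ≤ 4 * (12 * ((n + 3) * a)) := by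
          nlinarith [ha, h]
        omega
      rw [h2]
      calc 580 * 1492 * (12 * ((n + 1 + 3) * (2 * a)) - 7)
          ≤ 580 * 1492 * (4 * (12 * ((n + 3) * a) - 7)) := by
            exact Nat.mul_le_mul_left _ key
        _ = 4 * (580 * 1492 * (12 * ((n + 3) * a) - 7)) := by ring
        _ < 4 * ∏ i ∈ Finset.Icc 3 n, r i := by
            exact mul_lt_mul_of_pos_left ih' (by norm_num)
        _ ≤ (∏ i ∈ Finset.Icc 3 n, r i) * r (n + 1) := by
            rw [mul_comm]
            exact Nat.mul_le_mul_left _ hr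
        _ = ∏ i ∈ Finset.Icc 3 (n + 1), r i := hprod.symm
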